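/- Let k ≥ 1, m ≥ 1, and let w* ∈ ℝ^m be nonzero. Then w* is the unique global minimum of the no-overlap population loss ℓ: ℓ(w*) = 0 and ℓ(w) > 0 for every w ≠ w*. -/
import Mathlib


open scoped RealInnerProductSpace
open InnerProductGeometry Real

/-- The ReLU function `σ(z) = max{z, 0}`. -/
noncomputable def relu (z : ℝ) : ℝ := max z 0

/-- `g u v = (1/(2π))·‖u‖·‖v‖·(sin θ_{u,v} + (π − θ_{u,v})·cos θ_{u,v})`. -/
noncomputable def g {E : Type*} [NormedAddCommGroup E] [InnerProductSpace ℝ E]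
    (u v : E) : ℝ :=
  (1 / (2 * π)) * ‖u‖ * ‖v‖ *
    (Real.sin (angle u v) + (π - angle u v) * Real.cos (angle u v))

/-- The no-overlap population loss
`ℓ(w) = (1/k²)·(γ‖w‖² − 2k·g(w,w*) − 2β‖w‖‖w*‖ + γ‖w*‖²)`,
where `β = (k²−k)/(2π)` and `γ = β + k/2`. -/
noncomputable def nol {m : ℕ} (k : ℕ) (ws : EuclideanSpace ℝ (Fin m))
    (w : EuclideanSpace ℝ (Fin m)) : ℝ :=
  (1 / (k : ℝ) ^ 2) *
    (((((k : ℝ) ^ 2 - k) / (2 * π)) + (k : ℝ) / 2) * ‖w‖ ^ 2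
      - 2 * (k : ℝ) * g w ws
      - 2 * (((k : ℝ) ^ 2 - k) / (2 * π)) * ‖w‖ * ‖ws‖
      + ((((k : ℝ) ^ 2 - k) / (2 * π)) + (k : ℝ) / 2) * ‖ws‖ ^ 2)

/-- `w*` is the unique global minimum of the no-overlap population loss `ℓ`:
`ℓ(w*) = 0` and `ℓ(w) > 0` for every `w ≠ w*`. -/
lemma aux_h_lt_pi {θ : ℝ} (h0 : 0 < θ) (hπ : θ ≤ π) :
    Real.sin θ + (π - θ) * Real.cos θ < π := by
  set f : ℝ → ℝ := fun t => π - Real.sin t - (π - t) * Real.cos t with hf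
  have hderiv : ∀ t : ℝ, HasDerivAt f ((π - t) * Real.sin t) t := by
    intro t
    have h1 : HasDerivAt (fun t : ℝ => (π - t) * Real.cos t)
        ((-1) * Real.cos t + (π - t) * (-Real.sin t)) t :=
      (((hasDerivAt_id t).const_sub π).mul (Real.hasDerivAt_cos t))
    have h2 : HasDerivAt f (0 - Real.cos t - ((-1) * Real.cos t + (π - t) * (-Real.sin t))) t :=
      ((hasDerivAt_const t π).sub (Real.hasDerivAt_sin t)).sub h1
    convert h2 using 1; ring
  have hmono : StrictMonoOn f (Set.Icc 0 π) := by
    apply strictMonoOn_of_deriv_pos (convex_Icc 0 π)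
    · exact fun t _ => (hderiv t).continuousAt.continuousWithinAt
    · intro t ht
      rw [interior_Icc] at ht
      rw [(hderiv t).deriv]
      exact mul_pos (by linarith [ht.2]) (Real.sin_pos_of_pos_of_lt_pi ht.1 ht.2)
  have := hmono (Set.mem_Icc.mpr ⟨le_refl 0, Real.pi_pos.le⟩)
    (Set.mem_Icc.mpr ⟨h0.le, hπ⟩) h0
  simp only [hf, Real.sin_zero, Real.cos_zero, sub_zero, mul_one, sub_self] at this
  linarith

lemma aux_h_le_pi {θ : ℝ} (h0 : 0 ≤ θ) (hπ : θ ≤ π) :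
    Real.sin θ + (π - θ) * Real.cos θ ≤ π := by
  rcases eq_or_lt_of_le h0 with h | h
  · simp [← h]
  · exact (aux_h_lt_pi h hπ).le

theorem stmt5 (k m : ℕ) (hk : 1 ≤ k) (hm : 1 ≤ m)
    (ws : EuclideanSpace ℝ (Fin m)) (hws : ws ≠ 0) :
    nol k ws ws = 0 ∧ ∀ w : EuclideanSpace ℝ (Fin m), w ≠ ws → 0 < nol k ws w := by
  have hπ : (0:ℝ) < π := Real.pi_pos
  have hk1 : (1:ℝ) ≤ (k:ℝ) := by exact_mod_cast hk
  have hk0 : (k:ℝ) ≠ 0 := by linarith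
  have hγ : (0:ℝ) < (((k : ℝ) ^ 2 - k) / (2 * π)) + (k : ℝ) / 2 := by
    have : (0:ℝ) ≤ ((k : ℝ) ^ 2 - k) / (2 * π) :=
      div_nonneg (by nlinarith) (by positivity)
    linarith
  have hb : 0 < ‖ws‖ := norm_pos_iff.mpr hws
  -- key identity
  have key : ∀ w : EuclideanSpace ℝ (Fin m),
      nol k ws w = (1 / (k : ℝ) ^ 2) *
        ((((((k : ℝ) ^ 2 - k) / (2 * π)) + (k : ℝ) / 2)) * (‖w‖ - ‖ws‖) ^ 2
          + ((k : ℝ) / π) * ‖w‖ * ‖ws‖ *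
            (π - (Real.sin (angle w ws) + (π - angle w ws) * Real.cos (angle w ws)))) := by
    intro w
    unfold nol g
    field_simp
    ring
  constructor
  · rw [key ws]
    rw [angle_self hws]
    simp [Real.sin_zero, Real.cos_zero]
  · intro w hw
    rw [key w]
    have hang0 := angle_nonneg w ws
    have hangπ := angle_le_pi w ws
    have hle : Real.sin (angle w ws) + (π - angle w ws) * Real.cos (angle w ws) ≤ π :=
      aux_h_le_pi hang0 hangπ
    apply mul_pos (by positivity)
    rcases eq_or_ne ‖w‖ ‖ws‖ with hn | hn
    · -- norms equal, so angle must be positive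
      have hw0 : w ≠ 0 := by
        intro h; rw [h, norm_zero] at hn; exact hb.ne' hn.symm
      have hθ : 0 < angle w ws := by
        rcases eq_or_lt_of_le hang0 with h | h
        · exfalso
          obtain ⟨-, r, hr, hws_eq⟩ := angle_eq_zero_iff.mp h.symm
          have : ‖ws‖ = r * ‖w‖ := by
            rw [hws_eq, norm_smul, Real.norm_eq_abs, abs_of_pos hr]
          have hr1 : r = 1 := by
            rw [hn] at this
            have h2 : r * ‖ws‖ = 1 * ‖ws‖ := by rw [one_mul]; linarith
            exact mul_right_cancel₀ hb.ne' h2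
          rw [hr1, one_smul] at hws_eq
          exact hw hws_eq.symm
        · exact h
      have hlt := aux_h_lt_pi hθ hangπ
      have hwn : 0 < ‖w‖ := norm_pos_iff.mpr hw0
      have t2 : 0 < ((k : ℝ) / π) * ‖w‖ * ‖ws‖ *
          (π - (Real.sin (angle w ws) + (π - angle w ws) * Real.cos (angle w ws))) := by
        apply mul_pos (by positivity) (by linarith)
      nlinarith [sq_nonneg (‖w‖ - ‖ws‖)]
    · have t1 : 0 < (((((k : ℝ) ^ 2 - k) / (2 * π)) + (k : ℝ) / 2)) * (‖w‖ - ‖ws‖) ^ 2 :=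
        mul_pos hγ (by have := sub_ne_zero.mpr hn; positivity)
      have t2 : 0 ≤ ((k : ℝ) / π) * ‖w‖ * ‖ws‖ *
          (π - (Real.sin (angle w ws) + (π - angle w ws) * Real.cos (angle w ws))) := by
        apply mul_nonneg (by positivity) (by linarith)
      linarith
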